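/- (Example 7.5, the snakeboard: the one-form produced by the Chaplygin Hamilton–Jacobi method after two-stage reduction solves the nonholonomic Hamilton–Jacobi equation.) Let m, r, J₀, J₁ > 0 with m r² > J₀, and let E, γ_φ⁰, μ_ψ ∈ ℝ with E − (γ_φ⁰)²/(4J₁) − μ_ψ²/(2J₀) ≥ 0. Set C := √(E − (γ_φ⁰)²/(4J₁) − μ_ψ²/(2J₀)) and g(φ) := √((m r² − J₀ sin²φ)/2). Let U := {(θ,x,y,φ,ψ) ∈ ℝ⁵ : 0 < φ < π}. Define the one-form γ on U by γ(θ,x,y,φ,ψ) = (μ_ψ + (m r² − J₀)·C·sin φ / g(φ)) dθ − (m r C·cot φ·sin φ / g(φ))·(cos θ dx + sin θ dy) + γ_φ⁰ dφ + μ_ψ dψ. Then: (i) H(q, γ(q)) = E for all q ∈ U; and (ii) dγ_q(u, v) = 0 for all q ∈ U and all u, v ∈ D_q. -/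

import Mathlib

noncomputable section

open Matrix

/-- Hamiltonian of the snakeboard, coordinates `q = (θ, x, y, φ, ψ)`
(indices 0,1,2,3,4) and momenta `p = (p_θ, p_x, p_y, p_φ, p_ψ)`. -/
def snakeH (m r J0 J1 : ℝ) (p : Fin 5 → ℝ) : ℝ :=
  ((p 1) ^ 2 + (p 2) ^ 2) / (2 * m) + (p 0 - p 4) ^ 2 / (2 * (m * r ^ 2 - J0))
    + (p 3) ^ 2 / (4 * J1) + (p 4) ^ 2 / (2 * J0)

/-- Constraint distribution of the snakeboard, spanned by `∂_φ`, `∂_ψ` and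
`∂_θ − r cot φ cos θ ∂_x − r cot φ sin θ ∂_y`. -/
def snakeD (r : ℝ) (q : Fin 5 → ℝ) : Submodule ℝ (Fin 5 → ℝ) :=
  Submodule.span ℝ
    ({![0, 0, 0, 1, 0], ![0, 0, 0, 0, 1],
      ![1, -(r * (Real.cos (q 3) / Real.sin (q 3)) * Real.cos (q 0)),
        -(r * (Real.cos (q 3) / Real.sin (q 3)) * Real.sin (q 0)), 0, 0]} : Set (Fin 5 → ℝ))

/-- `C := √(E − (γ_φ⁰)²/(4J₁) − μ_ψ²/(2J₀))`. -/
def snakeC (J0 J1 E γφ0 μψ : ℝ) : ℝ :=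
  Real.sqrt (E - γφ0 ^ 2 / (4 * J1) - μψ ^ 2 / (2 * J0))

/-- `g(φ) := √((m r² − J₀ sin²φ)/2)`. -/
def snakeg (m r J0 : ℝ) (φ : ℝ) : ℝ :=
  Real.sqrt ((m * r ^ 2 - J0 * Real.sin φ ^ 2) / 2)

/-- The one-form produced by the Chaplygin Hamilton–Jacobi method after
two-stage reduction. -/
def snakeGamma (m r J0 J1 E γφ0 μψ : ℝ) (q : Fin 5 → ℝ) : Fin 5 → ℝ :=
  ![μψ + (m * r ^ 2 - J0) * snakeC J0 J1 E γφ0 μψ * Real.sin (q 3) / snakeg m r J0 (q 3),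
    -(m * r * snakeC J0 J1 E γφ0 μψ * (Real.cos (q 3) / Real.sin (q 3)) * Real.sin (q 3)
        / snakeg m r J0 (q 3)) * Real.cos (q 0),
    -(m * r * snakeC J0 J1 E γφ0 μψ * (Real.cos (q 3) / Real.sin (q 3)) * Real.sin (q 3)
        / snakeg m r J0 (q 3)) * Real.sin (q 0),
    γφ0, μψ]

/-- The domain `U := {q : 0 < φ < π}`. -/
def snakeU : Set (Fin 5 → ℝ) := {q | 0 < q 3 ∧ q 3 < Real.pi}

variable {m r J0 J1 E γφ0 μψ : ℝ}

lemma inner_pos (hJ0 : 0 < J0) (hmr : J0 < m * r ^ 2) (φ : ℝ) :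
    0 < (m * r ^ 2 - J0 * Real.sin φ ^ 2) / 2 := by
  nlinarith [Real.sin_sq_le_one φ, Real.neg_one_le_sin φ]

lemma snakeg_pos (hJ0 : 0 < J0) (hmr : J0 < m * r ^ 2) (φ : ℝ) :
    0 < snakeg m r J0 φ :=
  Real.sqrt_pos.2 (inner_pos hJ0 hmr φ)

lemma snakeg_sq (hJ0 : 0 < J0) (hmr : J0 < m * r ^ 2) (φ : ℝ) :
    snakeg m r J0 φ ^ 2 = (m * r ^ 2 - J0 * Real.sin φ ^ 2) / 2 :=
  Real.sq_sqrt (inner_pos hJ0 hmr φ).le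

def sngd (m r J0 : ℝ) (φ : ℝ) : ℝ :=
  -(J0 * Real.sin φ * Real.cos φ) / (2 * snakeg m r J0 φ)

lemma snakeg_hasDerivAt (hJ0 : 0 < J0) (hmr : J0 < m * r ^ 2) (φ : ℝ) :
    HasDerivAt (snakeg m r J0) (sngd m r J0 φ) φ := by
  have h1 : HasDerivAt (fun t => (m * r ^ 2 - J0 * Real.sin t ^ 2) / 2)
      (-(J0 * Real.sin φ * Real.cos φ)) φ := by
    have := (((Real.hasDerivAt_sin φ).pow 2).const_mul J0).const_sub (m * r ^ 2)
    have h2 := this.div_const 2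
    exact h2.congr_deriv (by simp; ring)
  have := h1.sqrt (ne_of_gt (inner_pos hJ0 hmr φ))
  rw [sngd]; exact this

def snA (m r J0 J1 E γφ0 μψ : ℝ) (φ : ℝ) : ℝ :=
  m * r * snakeC J0 J1 E γφ0 μψ * Real.cos φ / snakeg m r J0 φ

def snAd (m r J0 J1 E γφ0 μψ : ℝ) (φ : ℝ) : ℝ :=
  m * r * snakeC J0 J1 E γφ0 μψ *
    ((-Real.sin φ * snakeg m r J0 φ - Real.cos φ * sngd m r J0 φ) / snakeg m r J0 φ ^ 2)

def snBd (m r J0 J1 E γφ0 μψ : ℝ) (φ : ℝ) : ℝ :=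
  (m * r ^ 2 - J0) * snakeC J0 J1 E γφ0 μψ *
    ((Real.cos φ * snakeg m r J0 φ - Real.sin φ * sngd m r J0 φ) / snakeg m r J0 φ ^ 2)

lemma snA_hasDerivAt (hJ0 : 0 < J0) (hmr : J0 < m * r ^ 2) (φ : ℝ) :
    HasDerivAt (snA m r J0 J1 E γφ0 μψ) (snAd m r J0 J1 E γφ0 μψ φ) φ := by
  have h := ((Real.hasDerivAt_cos φ).div (snakeg_hasDerivAt hJ0 hmr φ)
      (ne_of_gt (snakeg_pos hJ0 hmr φ))).const_mul (m * r * snakeC J0 J1 E γφ0 μψ)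
  have e : snA m r J0 J1 E γφ0 μψ = fun y =>
      m * r * snakeC J0 J1 E γφ0 μψ * (Real.cos y / snakeg m r J0 y) := by
    funext y; rw [snA, mul_div_assoc]
  rw [snAd, e]; exact h

lemma snB_hasDerivAt (hJ0 : 0 < J0) (hmr : J0 < m * r ^ 2) (φ : ℝ) :
    HasDerivAt (fun t => μψ + (m * r ^ 2 - J0) * snakeC J0 J1 E γφ0 μψ *
        Real.sin t / snakeg m r J0 t) (snBd m r J0 J1 E γφ0 μψ φ) φ := by
  have h := (((Real.hasDerivAt_sin φ).div (snakeg_hasDerivAt hJ0 hmr φ)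
      (ne_of_gt (snakeg_pos hJ0 hmr φ))).const_mul
        ((m * r ^ 2 - J0) * snakeC J0 J1 E γφ0 μψ)).const_add μψ
  simpa only [snBd, mul_div_assoc, Pi.div_apply] using h

def snakeL (m r J0 J1 E γφ0 μψ : ℝ) (q : Fin 5 → ℝ) : (Fin 5 → ℝ) →L[ℝ] (Fin 5 → ℝ) :=
  ContinuousLinearMap.pi
    ![snBd m r J0 J1 E γφ0 μψ (q 3) • ContinuousLinearMap.proj 3,
      (snA m r J0 J1 E γφ0 μψ (q 3) * Real.sin (q 0)) • ContinuousLinearMap.proj 0 +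
        (-(snAd m r J0 J1 E γφ0 μψ (q 3)) * Real.cos (q 0)) • ContinuousLinearMap.proj 3,
      (-(snA m r J0 J1 E γφ0 μψ (q 3)) * Real.cos (q 0)) • ContinuousLinearMap.proj 0 +
        (-(snAd m r J0 J1 E γφ0 μψ (q 3)) * Real.sin (q 0)) • ContinuousLinearMap.proj 3,
      0, 0]

lemma snakeGamma_eventuallyEq (q : Fin 5 → ℝ) (hs : Real.sin (q 3) ≠ 0) :
    snakeGamma m r J0 J1 E γφ0 μψ =ᶠ[nhds q] fun x =>
      ![μψ + (m * r ^ 2 - J0) * snakeC J0 J1 E γφ0 μψ * Real.sin (x 3) / snakeg m r J0 (x 3),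
        -(snA m r J0 J1 E γφ0 μψ (x 3)) * Real.cos (x 0),
        -(snA m r J0 J1 E γφ0 μψ (x 3)) * Real.sin (x 0),
        γφ0, μψ] := by
  have hopen : IsOpen {x : Fin 5 → ℝ | Real.sin (x 3) ≠ 0} :=
    isOpen_ne.preimage (Real.continuous_sin.comp (continuous_apply 3))
  refine Filter.eventuallyEq_of_mem (hopen.mem_nhds hs) (fun x hx => ?_)
  have hx' : Real.sin (x 3) ≠ 0 := hx
  have key : m * r * snakeC J0 J1 E γφ0 μψ * (Real.cos (x 3) / Real.sin (x 3)) *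
      Real.sin (x 3) = m * r * snakeC J0 J1 E γφ0 μψ * Real.cos (x 3) := by
    field_simp
  funext i
  fin_cases i <;> simp only [snakeGamma, snA, Matrix.cons_val_zero, Matrix.cons_val_one,
    Matrix.head_cons, Matrix.cons_val_two, Matrix.tail_cons, Matrix.cons_val_three,
    Matrix.cons_val_four, Matrix.head_fin_const, key]

lemma snakeGamma_hasFDerivAt (hJ0 : 0 < J0) (hmr : J0 < m * r ^ 2)
    (q : Fin 5 → ℝ) (hs : Real.sin (q 3) ≠ 0) :
    HasFDerivAt (snakeGamma m r J0 J1 E γφ0 μψ) (snakeL m r J0 J1 E γφ0 μψ q) q := by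
  refine (hasFDerivAt_pi'.2 fun i => ?_).congr_of_eventuallyEq
    (snakeGamma_eventuallyEq q hs)
  rw [snakeL, ContinuousLinearMap.proj_pi]
  have hproj3 : HasFDerivAt (fun x : Fin 5 → ℝ => x 3)
      (ContinuousLinearMap.proj 3 : (Fin 5 → ℝ) →L[ℝ] ℝ) q := hasFDerivAt_apply 3 q
  have hproj0 : HasFDerivAt (fun x : Fin 5 → ℝ => x 0)
      (ContinuousLinearMap.proj 0 : (Fin 5 → ℝ) →L[ℝ] ℝ) q := hasFDerivAt_apply 0 q
  fin_cases i
  · simp only [Matrix.cons_val_zero]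
    have := (snB_hasDerivAt (J1 := J1) (E := E) (γφ0 := γφ0) (μψ := μψ) hJ0 hmr (q 3)).comp_hasFDerivAt q hproj3
    exact this
  · simp only [Matrix.cons_val_one, Matrix.head_cons]
    have hA : HasFDerivAt (fun x : Fin 5 → ℝ => -(snA m r J0 J1 E γφ0 μψ (x 3)))
        (-((snAd m r J0 J1 E γφ0 μψ (q 3)) •
          (ContinuousLinearMap.proj 3 : (Fin 5 → ℝ) →L[ℝ] ℝ))) q := by
      have := (((snA_hasDerivAt (J1 := J1) (E := E) (γφ0 := γφ0) (μψ := μψ) hJ0 hmr (q 3)).comp_hasFDerivAt q hproj3)).neg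
      exact this
    have hc : HasFDerivAt (fun x : Fin 5 → ℝ => Real.cos (x 0))
        ((-Real.sin (q 0)) • (ContinuousLinearMap.proj 0 : (Fin 5 → ℝ) →L[ℝ] ℝ)) q :=
      by have := (Real.hasDerivAt_cos (q 0)).comp_hasFDerivAt q hproj0; exact this
    have := hA.mul hc
    refine this.congr_fderiv ?_
    refine ContinuousLinearMap.ext fun y => ?_
    simp [ContinuousLinearMap.smul_apply, ContinuousLinearMap.proj_apply]
    ring
  · simp only [Matrix.cons_val_two, Matrix.tail_cons, Matrix.head_cons]
    have hA : HasFDerivAt (fun x : Fin 5 → ℝ => -(snA m r J0 J1 E γφ0 μψ (x 3)))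
        (-((snAd m r J0 J1 E γφ0 μψ (q 3)) •
          (ContinuousLinearMap.proj 3 : (Fin 5 → ℝ) →L[ℝ] ℝ))) q := by
      have := (((snA_hasDerivAt (J1 := J1) (E := E) (γφ0 := γφ0) (μψ := μψ) hJ0 hmr (q 3)).comp_hasFDerivAt q hproj3)).neg
      exact this
    have hc : HasFDerivAt (fun x : Fin 5 → ℝ => Real.sin (x 0))
        ((Real.cos (q 0)) • (ContinuousLinearMap.proj 0 : (Fin 5 → ℝ) →L[ℝ] ℝ)) q :=
      by have := (Real.hasDerivAt_sin (q 0)).comp_hasFDerivAt q hproj0; exact this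
    have := hA.mul hc
    refine this.congr_fderiv ?_
    refine ContinuousLinearMap.ext fun y => ?_
    simp [ContinuousLinearMap.smul_apply, ContinuousLinearMap.proj_apply]
    ring
  · exact hasFDerivAt_const γφ0 q
  · exact hasFDerivAt_const μψ q

lemma key_id (hJ0 : 0 < J0) (hmr : J0 < m * r ^ 2) (φ : ℝ) (hs : Real.sin φ ≠ 0) :
    snBd m r J0 J1 E γφ0 μψ φ
      + r * (Real.cos φ / Real.sin φ) * snAd m r J0 J1 E γφ0 μψ φ = 0 := by
  have hg := snakeg_pos (m := m) (r := r) hJ0 hmr φ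
  have hg2 := snakeg_sq (m := m) (r := r) hJ0 hmr φ
  have hpy := Real.sin_sq_add_cos_sq φ
  rw [snBd, snAd, sngd]
  set g := snakeg m r J0 φ
  field_simp
  linear_combination (J0*snakeC J0 J1 E γφ0 μψ*Real.cos φ) *
    (m*r^2*hpy - 2*hg2)

lemma omega_zero (hJ0 : 0 < J0) (hmr : J0 < m * r ^ 2) (q : Fin 5 → ℝ)
    (hs : Real.sin (q 3) ≠ 0) {u v : Fin 5 → ℝ}
    (hu : u ∈ snakeD r q) (hv : v ∈ snakeD r q) :
    snakeL m r J0 J1 E γφ0 μψ q u ⬝ᵥ v - snakeL m r J0 J1 E γφ0 μψ q v ⬝ᵥ u = 0 := by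
  set L := snakeL m r J0 J1 E γφ0 μψ q with hL
  have base : ∀ a ∈ ({![0, 0, 0, 1, 0], ![0, 0, 0, 0, 1],
      ![1, -(r * (Real.cos (q 3) / Real.sin (q 3)) * Real.cos (q 0)),
        -(r * (Real.cos (q 3) / Real.sin (q 3)) * Real.sin (q 0)), 0, 0]} : Set (Fin 5 → ℝ)),
      ∀ b ∈ ({![0, 0, 0, 1, 0], ![0, 0, 0, 0, 1],
      ![1, -(r * (Real.cos (q 3) / Real.sin (q 3)) * Real.cos (q 0)),
        -(r * (Real.cos (q 3) / Real.sin (q 3)) * Real.sin (q 0)), 0, 0]} : Set (Fin 5 → ℝ)),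
      L a ⬝ᵥ b - L b ⬝ᵥ a = 0 := by
    have hid := key_id (m := m) (r := r) (J0 := J0) (J1 := J1) (E := E) (γφ0 := γφ0)
      (μψ := μψ) hJ0 hmr (q 3) hs
    have hpy := Real.sin_sq_add_cos_sq (q 0)
    intro a ha b hb
    simp only [Set.mem_insert_iff, Set.mem_singleton_iff] at ha hb
    rcases ha with rfl | rfl | rfl <;> rcases hb with rfl | rfl | rfl <;>
      · simp only [hL, snakeL, ContinuousLinearMap.pi_apply, dotProduct, Fin.sum_univ_five,
          Matrix.cons_val_zero, Matrix.cons_val_one, Matrix.head_cons, Matrix.cons_val_two,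
          Matrix.tail_cons, Matrix.cons_val_three, Matrix.cons_val_four, Matrix.head_fin_const,
          ContinuousLinearMap.add_apply, ContinuousLinearMap.smul_apply,
          ContinuousLinearMap.proj_apply, ContinuousLinearMap.zero_apply, smul_eq_mul]
        first
          | ring1
          | linear_combination hid + (r * (Real.cos (q 3) / Real.sin (q 3)) *
              snAd m r J0 J1 E γφ0 μψ (q 3)) * hpy
          | linear_combination -hid - (r * (Real.cos (q 3) / Real.sin (q 3)) *
              snAd m r J0 J1 E γφ0 μψ (q 3)) * hpy
  have linear_v : ∀ a ∈ ({![0, 0, 0, 1, 0], ![0, 0, 0, 0, 1],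
      ![1, -(r * (Real.cos (q 3) / Real.sin (q 3)) * Real.cos (q 0)),
        -(r * (Real.cos (q 3) / Real.sin (q 3)) * Real.sin (q 0)), 0, 0]} : Set (Fin 5 → ℝ)),
      L a ⬝ᵥ v - L v ⬝ᵥ a = 0 := by
    intro a ha
    refine Submodule.span_induction (fun b hb => base a ha b hb) (by simp) ?_ ?_ hv
    · intro x y hx hy px py
      simp only [map_add, add_dotProduct, dotProduct_add]
      linarith [px, py]
    · intro c x hx px
      simp only [ContinuousLinearMap.map_smul, smul_dotProduct, dotProduct_smul, smul_eq_mul]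
      linear_combination c * px
  refine Submodule.span_induction (fun a ha => linear_v a ha) (by simp) ?_ ?_ hu
  · intro x y hx hy px py
    simp only [map_add, add_dotProduct, dotProduct_add]
    linarith [px, py]
  · intro c x hx px
    simp only [ContinuousLinearMap.map_smul, smul_dotProduct, dotProduct_smul, smul_eq_mul]
    linear_combination c * px

theorem statement18 (m r J0 J1 E γφ0 μψ : ℝ)
    (hm : 0 < m) (hr : 0 < r) (hJ0 : 0 < J0) (hJ1 : 0 < J1)
    (hmr : J0 < m * r ^ 2)
    (hE : 0 ≤ E - γφ0 ^ 2 / (4 * J1) - μψ ^ 2 / (2 * J0)) :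
    -- (i) the nonholonomic Hamilton–Jacobi equation on U
    (∀ q ∈ snakeU, snakeH m r J0 J1 (snakeGamma m r J0 J1 E γφ0 μψ q) = E)
      -- (ii) dγ vanishes on the constraint distribution
      ∧ (∀ q ∈ snakeU, ∀ u ∈ snakeD r q, ∀ v ∈ snakeD r q,
          fderiv ℝ (snakeGamma m r J0 J1 E γφ0 μψ) q u ⬝ᵥ v
            - fderiv ℝ (snakeGamma m r J0 J1 E γφ0 μψ) q v ⬝ᵥ u = 0) := by
  constructor
  · intro q hq
    have hsin : 0 < Real.sin (q 3) := Real.sin_pos_of_pos_of_lt_pi hq.1 hq.2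
    have hg := snakeg_pos (m := m) (r := r) hJ0 hmr (q 3)
    have hg2 := snakeg_sq (m := m) (r := r) hJ0 hmr (q 3)
    have hC2 : snakeC J0 J1 E γφ0 μψ ^ 2 = E - γφ0 ^ 2 / (4 * J1) - μψ ^ 2 / (2 * J0) :=
      Real.sq_sqrt hE
    have hpy0 := Real.sin_sq_add_cos_sq (q 0)
    have hpy3 := Real.sin_sq_add_cos_sq (q 3)
    have hK : (0:ℝ) < m * r ^ 2 - J0 := by linarith
    have e1 : m * r * snakeC J0 J1 E γφ0 μψ * (Real.cos (q 3) / Real.sin (q 3)) *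
        Real.sin (q 3) = m * r * snakeC J0 J1 E γφ0 μψ * Real.cos (q 3) := by
      field_simp
    simp only [snakeH, snakeGamma, Matrix.cons_val_zero, Matrix.cons_val_one, Matrix.head_cons,
      Matrix.cons_val_two, Matrix.tail_cons, Matrix.cons_val_three, Matrix.cons_val_four,
      Matrix.head_fin_const, e1]
    have h2 : (μψ + (m * r ^ 2 - J0) * snakeC J0 J1 E γφ0 μψ * Real.sin (q 3) /
          snakeg m r J0 (q 3) - μψ) ^ 2 / (2 * (m * r ^ 2 - J0))
        = (m * r ^ 2 - J0) * snakeC J0 J1 E γφ0 μψ ^ 2 * Real.sin (q 3) ^ 2 /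
          (2 * snakeg m r J0 (q 3) ^ 2) := by
      field_simp
      ring
    rw [h2]
    have hgne : snakeg m r J0 (q 3) ≠ 0 := ne_of_gt hg
    have hC2' : 8 * J0 * J1 * snakeC J0 J1 E γφ0 μψ ^ 2
        = 8 * J0 * J1 * E - 2 * J0 * γφ0 ^ 2 - 4 * J1 * μψ ^ 2 := by
      rw [hC2]; field_simp; ring
    field_simp
    linear_combination
        (4 * J0 * J1 * snakeC J0 J1 E γφ0 μψ ^ 2 * m * r ^ 2 * Real.cos (q 3) ^ 2) * hpy0
      + (4 * J0 * J1 * snakeC J0 J1 E γφ0 μψ ^ 2 * m * r ^ 2) * hpy3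
      - (8 * J0 * J1 * snakeC J0 J1 E γφ0 μψ ^ 2) * hg2
      + (snakeg m r J0 (q 3) ^ 2) * hC2'
  · intro q hq u hu v hv
    have hs : Real.sin (q 3) ≠ 0 :=
      ne_of_gt (Real.sin_pos_of_pos_of_lt_pi hq.1 hq.2)
    rw [(snakeGamma_hasFDerivAt hJ0 hmr q hs).fderiv]
    exact omega_zero hJ0 hmr q hs hu hv
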